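/- Let μ_n ⇒ μ be centred measures with E[|X_{μ_n}|] → E[|X_μ|], and suppose μ has no atom at x ∈ (infimum of support, 0). If P_n → P and P_n', P' denote put functions and their derivatives, and a_n⁺(x), a⁺(x) are the unique solutions z of P_n(x) + P_n'(x)(z - x) = C_n(z) and P(x) + P'(x)(z-x) = C(z) respectively, then a_n⁺(x) → a⁺(x). -/

import Mathlib

open MeasureTheory Set Filter Topology

namespace Stmt15Aux

variable {ν : Measure ℝ} [IsProbabilityMeasure ν]

lemma int_put (h : Integrable id ν) (t : ℝ) :
    Integrable (fun y => max (t - y) 0) ν :=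
  ((integrable_const t).sub h).pos_part

lemma int_call (h : Integrable id ν) (t : ℝ) :
    Integrable (fun y => max (y - t) 0) ν :=
  (h.sub (integrable_const t)).pos_part

lemma call_eq (h : Integrable id ν) (hc : (∫ y, y ∂ν) = 0) (t : ℝ) :
    (∫ y, max (y - t) 0 ∂ν) = ((∫ y, |y - t| ∂ν) - t) / 2 := by
  have h1 : ∀ y : ℝ, max (y - t) 0 = (|y - t| + (y - t)) / 2 := by
    intro y
    rcases le_total (y - t) 0 with h' | h'
    · rw [max_eq_right h', abs_of_nonpos h']; ring
    · rw [max_eq_left h', abs_of_nonneg h']; ring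
  have hsub : Integrable (fun y : ℝ => y - t) ν := h.sub (integrable_const t)
  simp_rw [h1]
  have h' : Integrable (fun y : ℝ => y) ν := h
  have key : (∫ y, (y - t) ∂ν) = -t := by
    have h2 := integral_sub h' (integrable_const t)
    simp only [integral_const, measure_univ, ENNReal.toReal_one, probReal_univ, one_smul] at h2
    rw [h2, show (∫ y, (fun y : ℝ => y) y ∂ν) = (∫ y, y ∂ν) from rfl, hc]; ring
  rw [integral_div, integral_add hsub.abs hsub, key]
  ring

lemma put_eq (h : Integrable id ν) (hc : (∫ y, y ∂ν) = 0) (t : ℝ) :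
    (∫ y, max (t - y) 0 ∂ν) = ((∫ y, |y - t| ∂ν) + t) / 2 := by
  have h1 : ∀ y : ℝ, max (t - y) 0 = (|y - t| + (t - y)) / 2 := by
    intro y
    rcases le_total (t - y) 0 with h' | h'
    · rw [max_eq_right h', abs_of_nonneg (by linarith : (0:ℝ) ≤ y - t)]; ring
    · rw [max_eq_left h', abs_of_nonpos (by linarith : y - t ≤ (0:ℝ))]; ring
  have hsub : Integrable (fun y : ℝ => t - y) ν := (integrable_const t).sub h
  have habs : Integrable (fun y : ℝ => |y - t|) ν := (h.sub (integrable_const t)).abs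
  simp_rw [h1]
  have h' : Integrable (fun y : ℝ => y) ν := h
  have key : (∫ y, (t - y) ∂ν) = t := by
    have h2 := integral_sub (integrable_const t) h'
    simp only [integral_const, measure_univ, ENNReal.toReal_one, probReal_univ, one_smul] at h2
    rw [h2, show (∫ y, (fun y : ℝ => y) y ∂ν) = (∫ y, y ∂ν) from rfl, hc]; ring
  rw [integral_div, integral_add habs hsub, key]

lemma convex_put (h : Integrable id ν) :
    ConvexOn ℝ univ (fun t => ∫ y, max (t - y) 0 ∂ν) := by
  refine ⟨convex_univ, fun s _ t _ a b ha hb hab => ?_⟩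
  simp only [smul_eq_mul]
  have pw : ∀ y : ℝ, max (a * s + b * t - y) 0 ≤ a * max (s - y) 0 + b * max (t - y) 0 := by
    intro y
    apply max_le
    · have he : a * s + b * t - y = a * (s - y) + b * (t - y) := by
        linear_combination y * hab
      rw [he]
      exact add_le_add (mul_le_mul_of_nonneg_left (le_max_left _ _) ha)
        (mul_le_mul_of_nonneg_left (le_max_left _ _) hb)
    · exact add_nonneg (mul_nonneg ha (le_max_right _ _)) (mul_nonneg hb (le_max_right _ _))
  calc (∫ y, max (a * s + b * t - y) 0 ∂ν)
      ≤ ∫ y, (a * max (s - y) 0 + b * max (t - y) 0) ∂ν :=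
        integral_mono (int_put h _) (((int_put h s).const_mul a).add
          ((int_put h t).const_mul b)) pw
    _ = a * (∫ y, max (s - y) 0 ∂ν) + b * (∫ y, max (t - y) 0 ∂ν) := by
        rw [integral_add ((int_put h s).const_mul a) ((int_put h t).const_mul b),
          integral_const_mul, integral_const_mul]

lemma lipschitz_call (h : Integrable id ν) :
    LipschitzWith 1 (fun t => ∫ y, max (y - t) 0 ∂ν) := by
  apply LipschitzWith.of_dist_le_mul
  intro s t
  rw [Real.dist_eq, Real.dist_eq, NNReal.coe_one, one_mul]
  rw [← integral_sub (int_call h s) (int_call h t)]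
  calc |∫ y, (max (y - s) 0 - max (y - t) 0) ∂ν|
      ≤ ∫ y, |max (y - s) 0 - max (y - t) 0| ∂ν :=
        by
          simpa [Real.norm_eq_abs] using norm_integral_le_integral_norm
            (μ := ν) (fun y => max (y - s) 0 - max (y - t) 0)
    _ ≤ ∫ _y, |s - t| ∂ν := by
        refine integral_mono ((int_call h s).sub (int_call h t)).abs (integrable_const _) ?_
        intro y
        have := abs_max_sub_max_le_abs (y - s) (y - t) 0
        have he : |(y - s) - (y - t)| = |s - t| := by rw [abs_sub_comm]; ring_nf
        dsimp only
        rw [← he]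
        exact this
    _ = |s - t| := by simp [measure_univ]

lemma tendsto_absdiff (μn : ℕ → Measure ℝ) (μ : Measure ℝ)
    [∀ n, IsProbabilityMeasure (μn n)] [IsProbabilityMeasure μ]
    (hintn : ∀ n, Integrable id (μn n)) (hint : Integrable id μ)
    (hweak : ∀ f : BoundedContinuousFunction ℝ ℝ,
      Tendsto (fun n => ∫ x, f x ∂μn n) atTop (nhds (∫ x, f x ∂μ)))
    (habs : Tendsto (fun n => ∫ x, |x| ∂μn n) atTop (nhds (∫ x, |x| ∂μ)))
    (t : ℝ) :
    Tendsto (fun n => ∫ y, |y - t| ∂μn n) atTop (𝓝 (∫ y, |y - t| ∂μ)) := by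
  set g : BoundedContinuousFunction ℝ ℝ :=
    BoundedContinuousFunction.ofNormedAddCommGroup (fun y => |y - t| - |y|)
      (((continuous_id.sub continuous_const).abs).sub continuous_abs) |t|
      (fun y => by
        rw [Real.norm_eq_abs]
        refine le_trans (abs_abs_sub_abs_le_abs_sub (y - t) y) ?_
        rw [show y - t - y = -t by ring, abs_neg]) with hg
  have key : ∀ (ν : Measure ℝ) [IsProbabilityMeasure ν], Integrable id ν →
      (∫ y, |y - t| ∂ν) = (∫ y, |y| ∂ν) + ∫ y, g y ∂ν := by
    intro ν _ h
    have h' : Integrable (fun y : ℝ => |y|) ν := h.abs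
    rw [← integral_add h' (g.integrable ν)]
    congr 1
    funext y
    simp only [hg, BoundedContinuousFunction.coe_ofNormedAddCommGroup]
    ring
  have e1 : ∀ n, (∫ y, |y - t| ∂μn n) = (∫ y, |y| ∂μn n) + ∫ y, g y ∂μn n :=
    fun n => key (μn n) (hintn n)
  have e2 : (∫ y, |y - t| ∂μ) = (∫ y, |y| ∂μ) + ∫ y, g y ∂μ := key μ hint
  simp_rw [e1, e2]
  exact habs.add (hweak g)

end Stmt15Aux

/-- Convergence of Perkins boundaries: with `μ_n ⇒ μ` weakly, convergence of
first absolute moments, `x` in (inf supp μ, 0) not an atom of μ, and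
`a_n⁺(x)`, `a⁺(x)` the unique solutions `z` of the tangency equations
`P_n(x) + P_n'(x)(z-x) = C_n(z)` and `P(x) + P'(x)(z-x) = C(z)`, we have
`a_n⁺(x) → a⁺(x)`. -/
theorem stmt_15 (μn : ℕ → Measure ℝ) (μ : Measure ℝ)
    [∀ n, IsProbabilityMeasure (μn n)] [IsProbabilityMeasure μ]
    (hintn : ∀ n, Integrable id (μn n)) (hcentn : ∀ n, (∫ x, x ∂μn n) = 0)
    (hint : Integrable id μ) (hcent : (∫ x, x ∂μ) = 0)
    (hweak : ∀ f : BoundedContinuousFunction ℝ ℝ,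
      Tendsto (fun n => ∫ x, f x ∂μn n) atTop (nhds (∫ x, f x ∂μ)))
    (habs : Tendsto (fun n => ∫ x, |x| ∂μn n) atTop (nhds (∫ x, |x| ∂μ)))
    (x : ℝ) (hxneg : x < 0) (hbelow : 0 < μ (Iio x)) (hatom : μ {x} = 0)
    (Pd : ℕ → ℝ) (PD : ℝ)
    (hPdn : ∀ n, HasDerivAt (fun t => ∫ y, max (t - y) 0 ∂μn n) (Pd n) x)
    (hPD : HasDerivAt (fun t => ∫ y, max (t - y) 0 ∂μ) PD x)
    (an : ℕ → ℝ) (A : ℝ)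
    (han : ∀ n, (∫ y, max (x - y) 0 ∂μn n) + Pd n * (an n - x)
        = ∫ y, max (y - an n) 0 ∂μn n)
    (hanuniq : ∀ n, ∀ z : ℝ, (∫ y, max (x - y) 0 ∂μn n) + Pd n * (z - x)
        = (∫ y, max (y - z) 0 ∂μn n) → z = an n)
    (hA : (∫ y, max (x - y) 0 ∂μ) + PD * (A - x) = ∫ y, max (y - A) 0 ∂μ)
    (hAuniq : ∀ z : ℝ, (∫ y, max (x - y) 0 ∂μ) + PD * (z - x)
        = (∫ y, max (y - z) 0 ∂μ) → z = A) :
    Tendsto an atTop (nhds A) := by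
  have habsd : ∀ t : ℝ, Tendsto (fun n => ∫ y, |y - t| ∂μn n) atTop
      (𝓝 (∫ y, |y - t| ∂μ)) := Stmt15Aux.tendsto_absdiff μn μ hintn hint hweak habs
  -- pointwise convergence of the call functions
  have hCconv : ∀ z : ℝ, Tendsto (fun n => ∫ y, max (y - z) 0 ∂μn n) atTop
      (𝓝 (∫ y, max (y - z) 0 ∂μ)) := by
    intro z
    have e1 : ∀ n, (∫ y, max (y - z) 0 ∂μn n) = ((∫ y, |y - z| ∂μn n) - z) / 2 :=
      fun n => Stmt15Aux.call_eq (hintn n) (hcentn n) z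
    have e2 : (∫ y, max (y - z) 0 ∂μ) = ((∫ y, |y - z| ∂μ) - z) / 2 :=
      Stmt15Aux.call_eq hint hcent z
    simp_rw [e1, e2]
    exact ((habsd z).sub tendsto_const_nhds).div_const 2
  -- pointwise convergence of the put functions
  have hPconv : ∀ t : ℝ, Tendsto (fun n => ∫ y, max (t - y) 0 ∂μn n) atTop
      (𝓝 (∫ y, max (t - y) 0 ∂μ)) := by
    intro t
    have e1 : ∀ n, (∫ y, max (t - y) 0 ∂μn n) = ((∫ y, |y - t| ∂μn n) + t) / 2 :=
      fun n => Stmt15Aux.put_eq (hintn n) (hcentn n) t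
    have e2 : (∫ y, max (t - y) 0 ∂μ) = ((∫ y, |y - t| ∂μ) + t) / 2 :=
      Stmt15Aux.put_eq hint hcent t
    simp_rw [e1, e2]
    exact ((habsd t).add tendsto_const_nhds).div_const 2
  -- convergence of the derivatives
  have hPdconv : Tendsto Pd atTop (𝓝 PD) := by
    rw [tendsto_order]
    constructor
    · intro b hb
      have hslope := hasDerivAt_iff_tendsto_slope.mp hPD
      have h1 : ∀ᶠ z in 𝓝[≠] x, b < slope (fun t => ∫ y, max (t - y) 0 ∂μ) x z :=
        hslope.eventually_const_lt hb
      have h2 : ∀ᶠ z in 𝓝[<] x, b < slope (fun t => ∫ y, max (t - y) 0 ∂μ) x z :=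
        h1.filter_mono (nhdsWithin_mono _ fun z hz => ne_of_lt hz)
      obtain ⟨z, hz1, hz2⟩ := (h2.and eventually_mem_nhdsWithin).exists
      have hzx : z < x := hz2
      have hbz : b < slope (fun t => ∫ y, max (t - y) 0 ∂μ) z x := by
        rwa [slope_comm] at hz1
      have hcv : ∀ n, slope (fun t => ∫ y, max (t - y) 0 ∂μn n) z x ≤ Pd n := fun n =>
        (Stmt15Aux.convex_put (hintn n)).slope_le_of_hasDerivAt (mem_univ z) (mem_univ x)
          hzx (hPdn n)
      have hsl : Tendsto (fun n => slope (fun t => ∫ y, max (t - y) 0 ∂μn n) z x) atTop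
          (𝓝 (slope (fun t => ∫ y, max (t - y) 0 ∂μ) z x)) := by
        simp only [slope_def_field]
        exact ((hPconv x).sub (hPconv z)).div_const _
      filter_upwards [hsl.eventually_const_lt hbz] with n hn
      exact lt_of_lt_of_le hn (hcv n)
    · intro b hb
      have hslope := hasDerivAt_iff_tendsto_slope.mp hPD
      have h1 : ∀ᶠ z in 𝓝[≠] x, slope (fun t => ∫ y, max (t - y) 0 ∂μ) x z < b :=
        hslope.eventually_lt_const hb
      have h2 : ∀ᶠ z in 𝓝[>] x, slope (fun t => ∫ y, max (t - y) 0 ∂μ) x z < b :=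
        h1.filter_mono (nhdsWithin_mono _ fun z hz => ne_of_gt hz)
      obtain ⟨z, hz1, hz2⟩ := (h2.and eventually_mem_nhdsWithin).exists
      have hzx : x < z := hz2
      have hcv : ∀ n, Pd n ≤ slope (fun t => ∫ y, max (t - y) 0 ∂μn n) x z := fun n =>
        (Stmt15Aux.convex_put (hintn n)).le_slope_of_hasDerivAt (mem_univ x) (mem_univ z)
          hzx (hPdn n)
      have hsl : Tendsto (fun n => slope (fun t => ∫ y, max (t - y) 0 ∂μn n) x z) atTop
          (𝓝 (slope (fun t => ∫ y, max (t - y) 0 ∂μ) x z)) := by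
        simp only [slope_def_field]
        exact ((hPconv z).sub (hPconv x)).div_const _
      filter_upwards [hsl.eventually_lt_const hz1] with n hn
      exact lt_of_le_of_lt (hcv n) hn
  -- positivity of PD
  have hPDpos : 0 < PD := by
    obtain ⟨k, hk⟩ : ∃ k : ℕ, μ (Iio (x - 1 / (k + 1))) ≠ 0 := by
      by_contra hcon
      push_neg at hcon
      have hsub : Iio x ⊆ ⋃ k : ℕ, Iio (x - 1 / (k + 1)) := by
        intro y hy
        obtain ⟨k, hk⟩ := exists_nat_one_div_lt (show (0:ℝ) < x - y by
          rw [mem_Iio] at hy; linarith)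
        exact mem_iUnion.2 ⟨k, by simp only [mem_Iio]; push_cast; linarith⟩
      exact absurd (measure_mono_null hsub (measure_iUnion_null fun k => hcon k))
        hbelow.ne'
    set h : ℝ := 1 / (k + 1 : ℝ) with hh
    have hhpos : 0 < h := by rw [hh]; positivity
    clear_value h
    set m : ℝ := (μ (Iio (x - h))).toReal with hm
    have hmpos : 0 < m := by rw [hm]; exact ENNReal.toReal_pos hk (measure_ne_top μ _)
    clear_value m
    have hkey : h * m ≤ (∫ y, max (x - y) 0 ∂μ) - ∫ y, max (x - h - y) 0 ∂μ := by
      have pw : ∀ y : ℝ, Set.indicator (Iio (x - h)) (fun _ => h) y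
          ≤ max (x - y) 0 - max (x - h - y) 0 := by
        intro y
        by_cases hy : y ∈ Iio (x - h)
        · rw [indicator_of_mem hy]
          have hy' : y < x - h := hy
          rw [max_eq_left (by linarith : (0:ℝ) ≤ x - y),
            max_eq_left (by linarith : (0:ℝ) ≤ x - h - y)]
          ring_nf
          linarith
        · rw [indicator_of_notMem hy]
          have : max (x - h - y) 0 ≤ max (x - y) 0 :=
            max_le_max (by linarith) le_rfl
          linarith
      have hind : Integrable (Set.indicator (Iio (x - h)) fun _ => h) μ :=
        (integrable_indicator_iff measurableSet_Iio).2
          (integrableOn_const (measure_lt_top μ _).ne)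
      have hI : Integrable (fun y => max (x - y) 0 - max (x - h - y) 0) μ :=
        (Stmt15Aux.int_put hint x).sub (Stmt15Aux.int_put hint (x - h))
      have hmono := integral_mono hind hI pw
      rw [integral_indicator_const _ measurableSet_Iio,
        integral_sub (Stmt15Aux.int_put hint x) (Stmt15Aux.int_put hint (x - h))] at hmono
      calc h * m = (μ (Iio (x - h))).toReal • h := by
            rw [smul_eq_mul, hm]; ring
        _ ≤ _ := hmono
    have hsl := (Stmt15Aux.convex_put hint).slope_le_of_hasDerivAt (mem_univ (x - h))
      (mem_univ x) (by linarith) hPD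
    rw [slope_def_field] at hsl
    have : m ≤ ((∫ y, max (x - y) 0 ∂μ) - ∫ y, max (x - h - y) 0 ∂μ) / (x - (x - h)) := by
      rw [show x - (x - h) = h by ring, le_div_iff₀ hhpos]
      linarith [hkey]
    linarith [hmpos, le_trans this hsl]
  -- sign facts for the limit tangency function
  have hCcont : Continuous (fun z => ∫ y, max (y - z) 0 ∂μ) :=
    (Stmt15Aux.lipschitz_call hint).continuous
  have hGcont : Continuous (fun z => (∫ y, max (x - y) 0 ∂μ) + PD * (z - x)
      - ∫ y, max (y - z) 0 ∂μ) :=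
    (continuous_const.add (continuous_const.mul (continuous_id.sub continuous_const))).sub
      hCcont
  have hCgeneg : ∀ z : ℝ, -z ≤ ∫ y, max (y - z) 0 ∂μ := by
    intro z
    have h' : Integrable (fun y : ℝ => y) μ := hint
    have key : (∫ y, (y - z) ∂μ) = -z := by
      have h2 := integral_sub h' (integrable_const z)
      simp only [integral_const, measure_univ, ENNReal.toReal_one, probReal_univ, one_smul] at h2
      rw [h2, show (∫ y, (fun y : ℝ => y) y ∂μ) = (∫ y, y ∂μ) from rfl, hcent]; ring
    calc -z = ∫ y, (y - z) ∂μ := key.symm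
      _ ≤ ∫ y, max (y - z) 0 ∂μ :=
        integral_mono (h'.sub (integrable_const z)) (Stmt15Aux.int_call hint z)
          (fun y => le_max_left _ _)
  have hMnn : (0:ℝ) ≤ ∫ y, |y| ∂μ := integral_nonneg fun y => abs_nonneg y
  have hCleM : ∀ z : ℝ, 0 ≤ z → (∫ y, max (y - z) 0 ∂μ) ≤ ∫ y, |y| ∂μ := by
    intro z hz
    refine integral_mono (Stmt15Aux.int_call hint z) hint.abs fun y => ?_
    exact max_le (by have := le_abs_self y; simp only [id]; linarith) (abs_nonneg _)
  have hGzero : ∀ z : ℝ, (∫ y, max (x - y) 0 ∂μ) + PD * (z - x)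
      - (∫ y, max (y - z) 0 ∂μ) = 0 → z = A := by
    intro z hz
    exact hAuniq z (by linarith)
  -- G is positive to the right of A
  have hGpos : ∀ w : ℝ, A < w → 0 < (∫ y, max (x - y) 0 ∂μ) + PD * (w - x)
      - ∫ y, max (y - w) 0 ∂μ := by
    intro w hw
    set Px : ℝ := ∫ y, max (x - y) 0 ∂μ with hPx
    clear_value Px
    set M : ℝ := ∫ y, |y| ∂μ with hM
    clear_value M
    by_contra hcontra
    push_neg at hcontra
    have hne : Px + PD * (w - x) - (∫ y, max (y - w) 0 ∂μ) ≠ 0 := by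
      intro h0
      exact absurd (hGzero w h0) (by linarith)
    have hlt : Px + PD * (w - x) - (∫ y, max (y - w) 0 ∂μ) < 0 :=
      lt_of_le_of_ne hcontra hne
    set z0 : ℝ := max w 0 + (|Px| + M + 1) / PD with hz0
    clear_value z0
    have hz0w : w < z0 := by
      have h1 : 0 < (|Px| + M + 1) / PD := by positivity
      have h2 : w ≤ max w 0 := le_max_left _ _
      linarith
    have hz0nn : 0 ≤ z0 := by
      have h1 : 0 < (|Px| + M + 1) / PD := by positivity
      have h2 : (0:ℝ) ≤ max w 0 := le_max_right _ _
      linarith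
    have hGz0 : 0 < Px + PD * (z0 - x) - ∫ y, max (y - z0) 0 ∂μ := by
      have hC0 : (∫ y, max (y - z0) 0 ∂μ) ≤ M := hCleM z0 hz0nn
      have hlin : |Px| + M + 1 ≤ PD * (z0 - x) := by
        have h2 : (|Px| + M + 1) / PD ≤ z0 - x := by
          have : (0:ℝ) ≤ max w 0 := le_max_right _ _
          have he : z0 - x = max w 0 + (|Px| + M + 1) / PD - x := by rw [hz0]
          linarith
        calc |Px| + M + 1 = PD * ((|Px| + M + 1) / PD) := by
              rw [mul_comm, div_mul_cancel₀ _ (ne_of_gt hPDpos)]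
          _ ≤ PD * (z0 - x) := mul_le_mul_of_nonneg_left h2 hPDpos.le
      have : -|Px| ≤ Px := neg_abs_le _
      linarith
    have hcont : ContinuousOn (fun z => Px + PD * (z - x) - ∫ y, max (y - z) 0 ∂μ)
        (Icc w z0) := hGcont.continuousOn
    have hmem : (0:ℝ) ∈ Icc (Px + PD * (w - x) - ∫ y, max (y - w) 0 ∂μ)
        (Px + PD * (z0 - x) - ∫ y, max (y - z0) 0 ∂μ) := ⟨hlt.le, hGz0.le⟩
    obtain ⟨c, hc, hc0⟩ := intermediate_value_Icc hz0w.le hcont hmem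
    have hcA : c = A := hGzero c hc0
    have : A < c := lt_of_lt_of_le hw hc.1
    exact absurd hcA (by linarith)
  -- G is negative to the left of A
  have hGneg : ∀ w : ℝ, w < A → (∫ y, max (x - y) 0 ∂μ) + PD * (w - x)
      - (∫ y, max (y - w) 0 ∂μ) < 0 := by
    intro w hw
    set Px : ℝ := ∫ y, max (x - y) 0 ∂μ with hPx
    clear_value Px
    by_contra hcontra
    push_neg at hcontra
    have hne : Px + PD * (w - x) - (∫ y, max (y - w) 0 ∂μ) ≠ 0 := by
      intro h0
      exact absurd (hGzero w h0) (by linarith)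
    have hgt : 0 < Px + PD * (w - x) - (∫ y, max (y - w) 0 ∂μ) :=
      lt_of_le_of_ne hcontra (Ne.symm hne)
    set z1 : ℝ := min w (min x (-Px - 1)) with hz1
    clear_value z1
    have hz1w : z1 ≤ w := by rw [hz1]; exact min_le_left _ _
    have hz1x : z1 ≤ x := by
      rw [hz1]; exact le_trans (min_le_right _ _) (min_le_left _ _)
    have hz1P : z1 ≤ -Px - 1 := by
      rw [hz1]; exact le_trans (min_le_right _ _) (min_le_right _ _)
    have hGz1 : Px + PD * (z1 - x) - (∫ y, max (y - z1) 0 ∂μ) < 0 := by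
      have h1 : PD * (z1 - x) ≤ 0 := mul_nonpos_of_nonneg_of_nonpos hPDpos.le (by linarith)
      have h2 : -z1 ≤ ∫ y, max (y - z1) 0 ∂μ := hCgeneg z1
      linarith
    have hcont : ContinuousOn (fun z => Px + PD * (z - x) - ∫ y, max (y - z) 0 ∂μ)
        (Icc z1 w) := hGcont.continuousOn
    have hmem : (0:ℝ) ∈ Icc (Px + PD * (z1 - x) - ∫ y, max (y - z1) 0 ∂μ)
        (Px + PD * (w - x) - ∫ y, max (y - w) 0 ∂μ) := ⟨hGz1.le, hgt.le⟩
    obtain ⟨c, hc, hc0⟩ := intermediate_value_Icc hz1w hcont hmem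
    have hcA : c = A := hGzero c hc0
    have : c < A := lt_of_le_of_lt hc.2 hw
    exact absurd hcA (by linarith)
  -- the main ε-argument
  rw [Metric.tendsto_atTop]
  intro ε hε
  have hε2 : 0 < ε / 2 := half_pos hε
  have hGp : 0 < (∫ y, max (x - y) 0 ∂μ) + PD * ((A + ε / 2) - x)
      - ∫ y, max (y - (A + ε / 2)) 0 ∂μ := hGpos _ (by linarith)
  have hGm : (∫ y, max (x - y) 0 ∂μ) + PD * ((A - ε / 2) - x)
      - (∫ y, max (y - (A - ε / 2)) 0 ∂μ) < 0 := hGneg _ (by linarith)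
  have hconvp : Tendsto (fun n => (∫ y, max (x - y) 0 ∂μn n) + Pd n * ((A + ε / 2) - x)
      - ∫ y, max (y - (A + ε / 2)) 0 ∂μn n) atTop
      (𝓝 ((∫ y, max (x - y) 0 ∂μ) + PD * ((A + ε / 2) - x)
        - ∫ y, max (y - (A + ε / 2)) 0 ∂μ)) :=
    ((hPconv x).add (hPdconv.mul_const _)).sub (hCconv _)
  have hconvm : Tendsto (fun n => (∫ y, max (x - y) 0 ∂μn n) + Pd n * ((A - ε / 2) - x)
      - ∫ y, max (y - (A - ε / 2)) 0 ∂μn n) atTop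
      (𝓝 ((∫ y, max (x - y) 0 ∂μ) + PD * ((A - ε / 2) - x)
        - ∫ y, max (y - (A - ε / 2)) 0 ∂μ)) :=
    ((hPconv x).add (hPdconv.mul_const _)).sub (hCconv _)
  have hev := (hconvp.eventually_const_lt hGp).and (hconvm.eventually_lt_const hGm)
  obtain ⟨N, hN⟩ := eventually_atTop.mp hev
  refine ⟨N, fun n hn => ?_⟩
  obtain ⟨h1, h2⟩ := hN n hn
  have hcont : ContinuousOn (fun z => (∫ y, max (x - y) 0 ∂μn n) + Pd n * (z - x)
      - ∫ y, max (y - z) 0 ∂μn n) (Icc (A - ε / 2) (A + ε / 2)) :=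
    ((continuous_const.add (continuous_const.mul (continuous_id.sub continuous_const))).sub
      (Stmt15Aux.lipschitz_call (hintn n)).continuous).continuousOn
  have hmem : (0:ℝ) ∈ Icc ((∫ y, max (x - y) 0 ∂μn n) + Pd n * ((A - ε / 2) - x)
      - ∫ y, max (y - (A - ε / 2)) 0 ∂μn n)
      ((∫ y, max (x - y) 0 ∂μn n) + Pd n * ((A + ε / 2) - x)
      - ∫ y, max (y - (A + ε / 2)) 0 ∂μn n) := ⟨h2.le, h1.le⟩
  obtain ⟨c, hc, hc0⟩ := intermediate_value_Icc (by linarith : A - ε / 2 ≤ A + ε / 2)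
    hcont hmem
  have hca : c = an n := hanuniq n c (by dsimp only at hc0; linarith)
  rw [Real.dist_eq, ← hca]
  have := hc.1
  have := hc.2
  rw [abs_sub_lt_iff]
  constructor <;> linarith
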